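/- Smallest disclosure threshold, part (ii): Suppose 𝒳 has at least two elements, P_X is a full-support prior on 𝒳, and p_min = min_{x∈𝒳} P_X(x). Then for every ε ≥ log(1/(1 − p_min)) there exist a finite nonempty set 𝒴, a mechanism P_{Y|X} from 𝒳 to 𝒴, a finite set 𝒰, and an attribute U of X given by a conditional pmf P_{U|X}, such that P_{Y|X} satisfies (ε, P_X)-PML and P_{Y|X} discloses the value of U to P_X. -/

import Mathlib

open Finset

/-- A probability mass function on a finite type. -/
def IsPMF {α : Type*} [Fintype α] (p : α → ℝ) : Prop :=
  (∀ a, 0 ≤ p a) ∧ ∑ a, p a = 1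

/-- Maximum value of a function on a finite nonempty type. -/
noncomputable def maxVal {α : Type*} [Fintype α] [Nonempty α] (p : α → ℝ) : ℝ :=
  Finset.univ.sup' Finset.univ_nonempty p

/-- Minimum value of a function on a finite nonempty type. -/
noncomputable def minVal {α : Type*} [Fintype α] [Nonempty α] (p : α → ℝ) : ℝ :=
  Finset.univ.inf' Finset.univ_nonempty p

/-- Min-entropy `H_∞(p) = -log (max_a p a)`. -/
noncomputable def minEntropy {α : Type*} [Fintype α] [Nonempty α] (p : α → ℝ) : ℝ :=
  - Real.log (maxVal p)

/-- Output marginal `q_Y(y) = ∑ x, p_{Y|X=x}(y) q(x)`. -/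
noncomputable def outMarginal {𝒳 𝒴 : Type*} [Fintype 𝒳] (P : 𝒳 → 𝒴 → ℝ)
    (q : 𝒳 → ℝ) (y : 𝒴) : ℝ :=
  ∑ x, P x y * q x

/-- Posterior on `𝒳` given outcome `y`. -/
noncomputable def posteriorX {𝒳 𝒴 : Type*} [Fintype 𝒳] (P : 𝒳 → 𝒴 → ℝ)
    (q : 𝒳 → ℝ) (y : 𝒴) (x : 𝒳) : ℝ :=
  P x y * q x / outMarginal P q y

/-- Prior of the attribute `U` induced by the kernel `PU` and the prior `q`. -/
noncomputable def attrPrior {𝒳 𝒰 : Type*} [Fintype 𝒳] (PU : 𝒳 → 𝒰 → ℝ)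
    (q : 𝒳 → ℝ) (u : 𝒰) : ℝ :=
  ∑ x, PU x u * q x

/-- Posterior of the attribute `U` given outcome `y`. -/
noncomputable def posteriorU {𝒳 𝒴 𝒰 : Type*} [Fintype 𝒳] (P : 𝒳 → 𝒴 → ℝ)
    (PU : 𝒳 → 𝒰 → ℝ) (q : 𝒳 → ℝ) (y : 𝒴) (u : 𝒰) : ℝ :=
  ∑ x, PU x u * posteriorX P q y x

/-- Pointwise maximal leakage `ℓ_q(X → y) = log (max_x p_{Y|X=x}(y) / q_Y(y))`. -/
noncomputable def pml {𝒳 𝒴 : Type*} [Fintype 𝒳] [Nonempty 𝒳] (P : 𝒳 → 𝒴 → ℝ)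
    (q : 𝒳 → ℝ) (y : 𝒴) : ℝ :=
  Real.log (maxVal (fun x => P x y) / outMarginal P q y)

/-- The mechanism `P` discloses the attribute `U` (given by `PU`) to the prior `q`:
there is an outcome `y` with positive marginal whose posterior on `U` has zero min-entropy. -/
def Discloses {𝒳 𝒴 𝒰 : Type*} [Fintype 𝒳] [Fintype 𝒰] [Nonempty 𝒰]
    (P : 𝒳 → 𝒴 → ℝ) (PU : 𝒳 → 𝒰 → ℝ) (q : 𝒳 → ℝ) : Prop :=
  ∃ y, 0 < outMarginal P q y ∧ minEntropy (posteriorU P PU q y) = 0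

/-- The mechanism `P` satisfies `(ε, q)`-PML. -/
def SatisfiesPML {𝒳 𝒴 : Type*} [Fintype 𝒳] [Nonempty 𝒳] (P : 𝒳 → 𝒴 → ℝ)
    (q : 𝒳 → ℝ) (ε : ℝ) : Prop :=
  ∀ y, 0 < outMarginal P q y → pml P q y ≤ ε

lemma maxVal_eq {α : Type*} [Fintype α] [Nonempty α] (p : α → ℝ) (c : ℝ)
    (h1 : ∀ a, p a ≤ c) (h2 : ∃ a, p a = c) : maxVal p = c := by
  refine le_antisymm (Finset.sup'_le _ _ fun a _ => h1 a) ?_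
  obtain ⟨a, ha⟩ := h2
  exact ha ▸ Finset.le_sup' p (Finset.mem_univ a)

/-- **Smallest disclosure threshold, part (ii).** If `𝒳` has at least two elements and
`ε ≥ log (1/(1 − p_min))` with `p_min = min_x P_X(x)`, then there exist a finite nonempty
outcome set `𝒴`, a mechanism `P` satisfying `(ε, P_X)`-PML, a finite alphabet `𝒰`, and an
attribute `U` of `X` such that the mechanism discloses the value of `U` to `P_X`. -/
theorem smallest_disclosure_threshold_attained
    {𝒳 : Type*} [Fintype 𝒳] [Nonempty 𝒳] (hcard : 1 < Fintype.card 𝒳)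
    (PX : 𝒳 → ℝ) (hPX : IsPMF PX) (hfs : ∀ x, 0 < PX x)
    (ε : ℝ) (hε : Real.log (1 / (1 - minVal PX)) ≤ ε) :
    ∃ (𝒴 : Type) (iY : Fintype 𝒴) (nY : Nonempty 𝒴) (P : 𝒳 → 𝒴 → ℝ),
      (∀ x, @IsPMF 𝒴 iY (P x)) ∧
      SatisfiesPML P PX ε ∧
      ∃ (𝒰 : Type) (iU : Fintype 𝒰) (nU : Nonempty 𝒰) (PU : 𝒳 → 𝒰 → ℝ),
        (∀ x, @IsPMF 𝒰 iU (PU x)) ∧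
        @Discloses 𝒳 𝒴 𝒰 _ iU nU P PU PX := by
  classical
  obtain ⟨x₀, -, hx₀⟩ := Finset.exists_mem_eq_inf' (Finset.univ_nonempty (α := 𝒳)) PX
  set m : ℝ := PX x₀ with hm
  have hmin : minVal PX = m := hx₀
  obtain ⟨x₁, hx₁⟩ := Fintype.exists_ne_of_one_lt_card hcard x₀
  have hsum : ∑ x, PX x = 1 := hPX.2
  have hm0 : 0 < m := hfs x₀
  have hm1 : m < 1 := by
    have hsub : ({x₀, x₁} : Finset 𝒳) ⊆ Finset.univ := Finset.subset_univ _
    have hle : ∑ x ∈ ({x₀, x₁} : Finset 𝒳), PX x ≤ ∑ x, PX x :=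
      Finset.sum_le_sum_of_subset_of_nonneg hsub (fun x _ _ => (hfs x).le)
    rw [Finset.sum_pair (Ne.symm hx₁), hsum] at hle
    have := hfs x₁
    linarith
  have h1m : (0:ℝ) < 1 - m := by linarith
  -- the mechanism and the attribute
  set P : 𝒳 → Bool → ℝ := fun x b =>
    if x = x₀ then (if b then 0 else 1) else (if b then m else 1 - m) with hP
  set PU : 𝒳 → Bool → ℝ := fun x u =>
    if x = x₀ then (if u then 1 else 0) else (if u then 0 else 1) with hPU
  -- marginal computations
  have hcompl : ∑ x ∈ ({x₀}ᶜ : Finset 𝒳), PX x = 1 - m := by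
    have h := Fintype.sum_eq_add_sum_compl x₀ PX
    rw [hsum] at h
    linarith [h]
  have hMtrue : outMarginal P PX true = m * (1 - m) := by
    unfold outMarginal
    rw [Fintype.sum_eq_add_sum_compl x₀]
    have : ∀ x ∈ ({x₀}ᶜ : Finset 𝒳), P x true * PX x = m * PX x := by
      intro x hx
      simp only [Finset.mem_compl, Finset.mem_singleton] at hx
      simp [hP, hx]
    rw [Finset.sum_congr rfl this, ← Finset.mul_sum, hcompl]
    simp [hP]
  have hMfalse : outMarginal P PX false = m + (1 - m) * (1 - m) := by
    unfold outMarginal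
    rw [Fintype.sum_eq_add_sum_compl x₀]
    have : ∀ x ∈ ({x₀}ᶜ : Finset 𝒳), P x false * PX x = (1 - m) * PX x := by
      intro x hx
      simp only [Finset.mem_compl, Finset.mem_singleton] at hx
      simp [hP, hx]
    rw [Finset.sum_congr rfl this, ← Finset.mul_sum, hcompl]
    simp [hP]
    exact hm.symm
  have hMtrue_pos : 0 < outMarginal P PX true := by rw [hMtrue]; positivity
  have hMfalse_pos : 0 < outMarginal P PX false := by rw [hMfalse]; nlinarith
  have hmaxtrue : maxVal (fun x => P x true) = m := by
    apply maxVal_eq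
    · intro a
      by_cases ha : a = x₀ <;> simp [hP, ha, hm0.le]
    · exact ⟨x₁, by simp [hP, hx₁]⟩
  have hmaxfalse : maxVal (fun x => P x false) = 1 := by
    apply maxVal_eq
    · intro a
      by_cases ha : a = x₀ <;> simp [hP, ha] <;> linarith
    · exact ⟨x₀, by simp [hP]⟩
  have hεbound : Real.log (1 / (1 - m)) ≤ ε := by rwa [hmin] at hε
  refine ⟨Bool, inferInstance, inferInstance, P, ?_, ?_, Bool, inferInstance, inferInstance,
    PU, ?_, ?_⟩
  · -- each P x is a PMF
    intro x
    constructor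
    · intro b
      by_cases hx : x = x₀ <;> cases b <;> simp [hP, hx] <;> linarith
    · rw [Fintype.sum_bool]
      by_cases hx : x = x₀ <;> simp [hP, hx]
  · -- PML bound
    intro y _
    cases y
    · -- y = false
      unfold pml
      rw [hmaxfalse, hMfalse]
      have h1 : (0:ℝ) < m + (1 - m) * (1 - m) := by nlinarith
      have hle : 1 / (m + (1 - m) * (1 - m)) ≤ 1 / (1 - m) := by
        apply one_div_le_one_div_of_le h1m
        nlinarith
      calc Real.log (1 / (m + (1 - m) * (1 - m))) ≤ Real.log (1 / (1 - m)) :=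
            Real.log_le_log (by positivity) hle
        _ ≤ ε := hεbound
    · -- y = true
      unfold pml
      rw [hmaxtrue, hMtrue]
      have : m / (m * (1 - m)) = 1 / (1 - m) := by
        rw [eq_div_iff h1m.ne']
        field_simp
      rw [this]
      exact hεbound
  · -- each PU x is a PMF
    intro x
    constructor
    · intro u
      by_cases hx : x = x₀ <;> cases u <;> simp [hPU, hx]
    · rw [Fintype.sum_bool]
      by_cases hx : x = x₀ <;> simp [hPU, hx]
  · -- disclosure at y = true
    refine ⟨true, hMtrue_pos, ?_⟩
    have hfalse : posteriorU P PU PX true false = 1 := by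
      unfold posteriorU posteriorX
      rw [Fintype.sum_eq_add_sum_compl x₀]
      have : ∀ x ∈ ({x₀}ᶜ : Finset 𝒳), PU x false * (P x true * PX x / outMarginal P PX true)
          = (m / outMarginal P PX true) * PX x := by
        intro x hx
        simp only [Finset.mem_compl, Finset.mem_singleton] at hx
        simp [hP, hPU, hx]
        ring
      rw [Finset.sum_congr rfl this, ← Finset.mul_sum, hcompl, hMtrue]
      simp only [hP, hPU, if_pos rfl, if_neg, Bool.false_eq_true, if_false, zero_mul,
        mul_zero, zero_div, zero_add]
      field_simp
    have htrue : posteriorU P PU PX true true = 0 := by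
      unfold posteriorU posteriorX
      rw [Fintype.sum_eq_add_sum_compl x₀]
      have h2 : ∀ x ∈ ({x₀}ᶜ : Finset 𝒳), PU x true * (P x true * PX x / outMarginal P PX true)
          = 0 := by
        intro x hx
        simp only [Finset.mem_compl, Finset.mem_singleton] at hx
        simp [hPU, hx]
      rw [Finset.sum_congr rfl h2]
      simp [hP, hPU]
    have hmax : maxVal (posteriorU P PU PX true) = 1 := by
      apply maxVal_eq
      · intro u
        cases u
        · rw [hfalse]
        · rw [htrue]; norm_num
      · exact ⟨false, hfalse⟩
    unfold minEntropy
    rw [hmax, Real.log_one, neg_zero]
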